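/- Let F be a finite field with q elements, q odd, and n ≥ 2. For nonempty subsets A, B ⊆ F^n, let N₁(A,B) be the number of pairs (a,b) ∈ A×B with dot product a·b = 1. Then |N₁(A,B) - q^{-1}|A||B|| < q^{(n-1)/2}·√(|A||B|). -/

import Mathlib

open Finset

set_option maxHeartbeats 1000000
set_option linter.unusedSectionVars false

section Aux
variable {F : Type*} [Field F] [Fintype F] [DecidableEq F]

variable {F : Type*} [Field F] [Fintype F] [DecidableEq F]

lemma psi_map_sum {ι : Type*} (ψ : AddChar F ℂ) (s : Finset ι) (f : ι → F) :
    ψ (∑ i ∈ s, f i) = ∏ i ∈ s, ψ (f i) := by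
  induction s using Finset.cons_induction with
  | empty => simp
  | cons i s hi ih => simp [Finset.sum_cons, Finset.prod_cons, AddChar.map_add_eq_mul, ih]

lemma key0 (ψ : AddChar F ℂ) (hψ : ψ ≠ 1) (x : F) :
    ∑ t : F, ψ (t * x) = if x = 0 then (Fintype.card F : ℂ) else 0 := by
  split_ifs with h
  · simp [h, Finset.card_univ]
  · have hprim : ψ.IsPrimitive := AddChar.IsPrimitive.of_ne_one hψ
    have h0 : ψ.mulShift x ≠ 0 := by
      rw [← AddChar.one_eq_zero]
      exact hprim h
    have := AddChar.sum_eq_zero_iff_ne_zero.mpr h0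
    rw [← this]
    exact Finset.sum_congr rfl fun t _ => by rw [AddChar.mulShift_apply, mul_comm]

lemma key1 (ψ : AddChar F ℂ) (hψ : ψ ≠ 1) (x : F) :
    ∑ t ∈ Finset.univ.erase (0 : F), ψ (t * x)
      = (if x = 0 then (Fintype.card F : ℂ) else 0) - 1 := by
  rw [Finset.sum_erase_eq_sub (Finset.mem_univ 0), key0 ψ hψ, zero_mul,
    AddChar.map_zero_eq_one]

lemma key2 {n : ℕ} (ψ : AddChar F ℂ) (hψ : ψ ≠ 1) (v : Fin n → F) :
    ∑ a : Fin n → F, ψ (dotProduct a v)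
      = if v = 0 then ((Fintype.card F : ℂ)) ^ n else 0 := by
  have : ∀ a : Fin n → F, ψ (dotProduct a v) = ∏ i, ψ (a i * v i) := fun a =>
    psi_map_sum ψ _ _
  simp_rw [this]
  rw [← Fintype.piFinset_univ,
    ← Finset.prod_univ_sum (fun _ : Fin n => (Finset.univ : Finset F))
      (fun i x => ψ (x * v i))]
  have : ∀ i : Fin n, ∑ x : F, ψ (x * v i) = if v i = 0 then (Fintype.card F : ℂ) else 0 :=
    fun i => key0 ψ hψ (v i)
  simp_rw [this]
  by_cases hv : v = 0
  · simp [hv, Finset.card_univ]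
  · obtain ⟨i, hi⟩ : ∃ i, v i ≠ 0 := by
      by_contra h
      push_neg at h
      exact hv (funext h)
    rw [if_neg hv]
    exact Finset.prod_eq_zero (Finset.mem_univ i) (by rw [if_neg hi])


lemma Tbound {n : ℕ} (ψ : AddChar F ℂ) (hψ : ψ ≠ 1) (B : Finset (Fin n → F)) :
    ∑ a : Fin n → F, ‖∑ p ∈ (Finset.univ.erase (0:F)) ×ˢ B,
        ψ (p.1 * (dotProduct a p.2 - 1))‖ ^ 2
      ≤ (Fintype.card F : ℝ) ^ n * ((Fintype.card F : ℝ) - 1) * B.card := by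
  classical
  set E : Finset F := Finset.univ.erase (0:F) with hE
  set f : (Fin n → F) → ℂ :=
    fun a => ∑ p ∈ E ×ˢ B, ψ (p.1 * (dotProduct a p.2 - 1)) with hf
  have hcard : (1:ℝ) ≤ (Fintype.card F : ℝ) := by exact_mod_cast Fintype.card_pos
  have h1E : (1:F) ∈ E := Finset.mem_erase.mpr ⟨one_ne_zero, Finset.mem_univ _⟩
  have hsne : ∀ s ∈ E, s ≠ (0:F) := fun s hs => (Finset.mem_erase.mp hs).1
  have hTC : ((∑ a : Fin n → F, ‖f a‖ ^ 2 : ℝ) : ℂ)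
      = ∑ a : Fin n → F, f a * (starRingEnd ℂ) (f a) := by
    push_cast
    refine Finset.sum_congr rfl fun a _ => ?_
    calc ((‖f a‖ : ℂ))^2
        = ((‖f a‖ ^ 2 : ℝ) : ℂ) := by push_cast; ring
      _ = ((Complex.normSq (f a) : ℝ) : ℂ) := by rw [Complex.sq_norm]
      _ = f a * (starRingEnd ℂ) (f a) := (Complex.mul_conj _).symm
  have expand : ∀ a, f a * (starRingEnd ℂ) (f a)
      = ∑ p ∈ E ×ˢ B, ∑ r ∈ E ×ˢ B,
          ψ (dotProduct a (p.1 • p.2 - r.1 • r.2)) * ψ (r.1 - p.1) := by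
    intro a
    rw [hf, map_sum, Finset.sum_mul_sum]
    refine Finset.sum_congr rfl fun p _ => Finset.sum_congr rfl fun r _ => ?_
    rw [← AddChar.map_neg_eq_conj, ← AddChar.map_add_eq_mul, ← AddChar.map_add_eq_mul]
    congr 1
    simp only [dotProduct_sub, dotProduct_smul, smul_eq_mul]
    ring
  have step3 : ∑ a : Fin n → F, f a * (starRingEnd ℂ) (f a)
      = ∑ p ∈ E ×ˢ B, ∑ r ∈ E ×ˢ B,
          (if p.1 • p.2 - r.1 • r.2 = 0 then ((Fintype.card F:ℂ))^n else 0) * ψ (r.1 - p.1) := by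
    simp_rw [expand]
    rw [Finset.sum_comm]
    refine Finset.sum_congr rfl fun p _ => ?_
    rw [Finset.sum_comm]
    refine Finset.sum_congr rfl fun r _ => ?_
    rw [← Finset.sum_mul, key2 ψ hψ]
  have step4 : ∑ p ∈ E ×ˢ B, ∑ r ∈ E ×ˢ B,
          (if p.1 • p.2 - r.1 • r.2 = 0 then ((Fintype.card F:ℂ))^n else 0) * ψ (r.1 - p.1)
      = ∑ b ∈ B, ∑ s ∈ E, ∑ t ∈ E, ∑ b' ∈ B,
          (if t • b - s • b' = 0 then ((Fintype.card F:ℂ))^n else 0) * ψ (s - t) := by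
    rw [Finset.sum_product]
    simp_rw [Finset.sum_product]
    rw [Finset.sum_comm]
    exact Finset.sum_congr rfl fun b _ => Finset.sum_comm
  have step5 : ∀ b, ∀ s ∈ E, ∀ t ∈ E,
      ∑ b' ∈ B, (if t • b - s • b' = 0 then ((Fintype.card F:ℂ))^n else 0) * ψ (s - t)
        = (if ((s⁻¹ * t) • b) ∈ B then ((Fintype.card F:ℂ))^n * ψ (s - t) else 0) := by
    intro b s hs t _
    have hs0 : s ≠ 0 := hsne s hs
    have hcond : ∀ b' : Fin n → F, (t • b - s • b' = 0) ↔ (b' = (s⁻¹ * t) • b) := by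
      intro b'
      rw [sub_eq_zero, ← smul_smul]
      constructor
      · intro h
        have := congrArg (fun x => s⁻¹ • x) h.symm
        simpa [smul_smul, inv_mul_cancel₀ hs0] using this
      · intro h
        rw [h, smul_smul, smul_smul, mul_inv_cancel₀ hs0, one_mul]
    calc ∑ b' ∈ B, (if t • b - s • b' = 0 then ((Fintype.card F:ℂ))^n else 0) * ψ (s - t)
        = ∑ b' ∈ B, (if b' = (s⁻¹ * t) • b then ((Fintype.card F:ℂ))^n * ψ (s - t) else 0) := by
          refine Finset.sum_congr rfl fun b' _ => ?_
          rw [ite_mul, zero_mul]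
          exact if_congr (hcond b') rfl rfl
      _ = _ := by
          rw [Finset.sum_ite_eq' B ((s⁻¹ * t) • b)
            (fun _ => ((Fintype.card F:ℂ))^n * ψ (s - t))]
  have step6 : ∀ b, ∀ s ∈ E,
      ∑ t ∈ E, (if ((s⁻¹ * t) • b) ∈ B then ((Fintype.card F:ℂ))^n * ψ (s - t) else 0)
        = ∑ u ∈ E, (if (u • b) ∈ B then ((Fintype.card F:ℂ))^n * ψ (s * (1 - u)) else 0) := by
    intro b s hs
    have hs0 : s ≠ 0 := hsne s hs
    refine Finset.sum_bij' (fun t _ => s⁻¹ * t) (fun u _ => s * u) ?_ ?_ ?_ ?_ ?_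
    · intro t ht
      exact Finset.mem_erase.mpr ⟨mul_ne_zero (inv_ne_zero hs0) (hsne t ht), Finset.mem_univ _⟩
    · intro u hu
      exact Finset.mem_erase.mpr ⟨mul_ne_zero hs0 (hsne u hu), Finset.mem_univ _⟩
    · intro t _; field_simp
    · intro u _; field_simp
    · intro t _
      have h1 : s * (1 - s⁻¹ * t) = s - t := by field_simp
      rw [h1]
  have step7 : ∀ b ∈ B,
      ∑ s ∈ E, ∑ u ∈ E, (if (u • b) ∈ B then ((Fintype.card F:ℂ))^n * ψ (s * (1 - u)) else 0)
        = ∑ u ∈ E, (if (u • b) ∈ B then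
            ((Fintype.card F:ℂ))^n * ((if u = 1 then (Fintype.card F:ℂ) else 0) - 1) else 0) := by
    intro b _
    rw [Finset.sum_comm]
    refine Finset.sum_congr rfl fun u _ => ?_
    by_cases hmem : (u • b) ∈ B
    · simp only [if_pos hmem]
      rw [← Finset.mul_sum, key1 ψ hψ]
      simp only [sub_eq_zero, show ((1:F) = u) ↔ (u = 1) from eq_comm]
    · simp only [if_neg hmem, Finset.sum_const_zero]
  have hid : ((∑ a : Fin n → F, ‖f a‖ ^ 2 : ℝ) : ℂ)
      = ∑ b ∈ B, ∑ u ∈ E, (if (u • b) ∈ B then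
          ((Fintype.card F:ℂ))^n * ((if u = 1 then (Fintype.card F:ℂ) else 0) - 1) else 0) := by
    rw [hTC, step3, step4]
    refine Finset.sum_congr rfl fun b hb => ?_
    rw [← step7 b hb]
    refine Finset.sum_congr rfl fun s hs => ?_
    rw [← step6 b s hs]
    exact Finset.sum_congr rfl fun t ht => step5 b s hs t ht
  set R : (Fin n → F) → F → ℝ := fun b u => if (u • b) ∈ B then
      ((Fintype.card F:ℝ))^n * ((if u = 1 then (Fintype.card F:ℝ) else 0) - 1) else 0 with hR
  have hreal : ∑ a : Fin n → F, ‖f a‖ ^ 2 = ∑ b ∈ B, ∑ u ∈ E, R b u := by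
    have hcast : ((∑ b ∈ B, ∑ u ∈ E, R b u : ℝ) : ℂ)
        = ((∑ a : Fin n → F, ‖f a‖ ^ 2 : ℝ) : ℂ) := by
      rw [hid]
      push_cast
      refine Finset.sum_congr rfl fun b _ => Finset.sum_congr rfl fun u _ => ?_
      simp only [hR]
      split_ifs <;> push_cast <;> ring
    exact (Complex.ofReal_inj.mp hcast).symm
  have hqn : (0:ℝ) ≤ ((Fintype.card F:ℝ))^n := by positivity
  have hRb : ∀ b ∈ B, ∑ u ∈ E, R b u
      ≤ ((Fintype.card F:ℝ))^n * ((Fintype.card F:ℝ) - 1) := by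
    intro b _
    have hle : ∀ u ∈ E, R b u
        ≤ (if u = 1 then ((Fintype.card F:ℝ))^n * ((Fintype.card F:ℝ) - 1) else 0) := by
      intro u _
      simp only [hR]
      split_ifs <;> nlinarith
    calc ∑ u ∈ E, R b u
        ≤ ∑ u ∈ E, (if u = 1 then ((Fintype.card F:ℝ))^n * ((Fintype.card F:ℝ) - 1) else 0) :=
          Finset.sum_le_sum hle
      _ = _ := by
          rw [Finset.sum_ite_eq' E 1
            (fun _ => ((Fintype.card F:ℝ))^n * ((Fintype.card F:ℝ) - 1)), if_pos h1E]
  rw [hreal]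
  calc ∑ b ∈ B, ∑ u ∈ E, R b u
      ≤ ∑ _b ∈ B, ((Fintype.card F:ℝ))^n * ((Fintype.card F:ℝ) - 1) := Finset.sum_le_sum hRb
    _ = _ := by rw [Finset.sum_const, nsmul_eq_mul]; ring

end Aux

theorem dot_product_count_estimate
    (F : Type*) [Field F] [Fintype F] [DecidableEq F]
    (q n : ℕ) (hq : Fintype.card F = q) (hqodd : Odd q) (hn : 2 ≤ n)
    (A B : Finset (Fin n → F)) (hA : A.Nonempty) (hB : B.Nonempty) :
    |((((A ×ˢ B).filter (fun p => dotProduct p.1 p.2 = 1)).card : ℝ) -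
        (q : ℝ)⁻¹ * A.card * B.card)| <
      (q : ℝ) ^ (((n : ℝ) - 1) / 2) * Real.sqrt (A.card * B.card) := by
  classical
  subst hq
  obtain ⟨ψ, hψ1⟩ := AddChar.exists_apply_ne_zero.mpr (one_ne_zero (α := F))
  have hψ : ψ ≠ 1 := by
    intro h; rw [h] at hψ1; exact hψ1 rfl
  set E : Finset F := Finset.univ.erase (0:F) with hE
  set f : (Fin n → F) → ℂ :=
    fun a => ∑ p ∈ E ×ˢ B, ψ (p.1 * (dotProduct a p.2 - 1)) with hf
  set S : ℂ := ∑ a ∈ A, f a with hS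
  set N : ℕ := ((A ×ˢ B).filter (fun p => dotProduct p.1 p.2 = 1)).card with hN
  have hQpos : (0:ℝ) < (Fintype.card F : ℝ) := by exact_mod_cast Fintype.card_pos
  have hQ0 : (Fintype.card F : ℂ) ≠ 0 := Nat.cast_ne_zero.mpr Fintype.card_ne_zero
  -- value of S
  have h1 : ∀ a, f a = ∑ b ∈ B,
      ((if dotProduct a b = 1 then (Fintype.card F:ℂ) else 0) - 1) := by
    intro a
    simp only [hf]
    rw [hE, Finset.sum_product, Finset.sum_comm]
    refine Finset.sum_congr rfl fun b _ => ?_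
    rw [key1 ψ hψ (dotProduct a b - 1)]
    congr 1
    exact if_congr sub_eq_zero rfl rfl
  have hSval : S = (Fintype.card F : ℂ) * N - (A.card : ℂ) * B.card := by
    calc S = ∑ a ∈ A, ∑ b ∈ B,
          ((if dotProduct a b = 1 then (Fintype.card F:ℂ) else 0) - 1) :=
          Finset.sum_congr rfl fun a _ => h1 a
      _ = ∑ p ∈ A ×ˢ B,
          ((if dotProduct p.1 p.2 = 1 then (Fintype.card F:ℂ) else 0) - 1) :=
          by rw [Finset.sum_product]
      _ = (∑ p ∈ A ×ˢ B,
            (if dotProduct p.1 p.2 = 1 then (Fintype.card F:ℂ) else 0))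
          - (A ×ˢ B).card := by
          rw [Finset.sum_sub_distrib, Finset.sum_const, nsmul_eq_mul, mul_one]
      _ = (Fintype.card F : ℂ) * N - (A.card : ℂ) * B.card := by
          rw [← Finset.sum_filter, Finset.sum_const, nsmul_eq_mul, Finset.card_product, ← hN]
          push_cast
          ring
  -- Cauchy-Schwarz
  have hCS : ‖S‖ ^ 2 ≤ (A.card : ℝ) * ∑ a : Fin n → F, ‖f a‖ ^ 2 := by
    have h2 : ‖S‖ ≤ ∑ a ∈ A, ‖f a‖ := by
      simp only [hS]
      exact norm_sum_le _ _
    have h3 : (∑ a ∈ A, ‖f a‖) ^ 2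
        ≤ (A.card : ℝ) * ∑ a ∈ A, ‖f a‖ ^ 2 := by
      have := Finset.sum_mul_sq_le_sq_mul_sq A (fun _ => (1:ℝ)) (fun a => ‖f a‖)
      simpa using this
    have h4 : ∑ a ∈ A, ‖f a‖ ^ 2 ≤ ∑ a : Fin n → F, ‖f a‖ ^ 2 :=
      Finset.sum_le_sum_of_subset_of_nonneg (Finset.subset_univ A)
        (fun i _ _ => by positivity)
    calc ‖S‖ ^ 2 ≤ (∑ a ∈ A, ‖f a‖) ^ 2 :=
          pow_le_pow_left₀ (norm_nonneg S) h2 2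
      _ ≤ (A.card : ℝ) * ∑ a ∈ A, ‖f a‖ ^ 2 := h3
      _ ≤ (A.card : ℝ) * ∑ a : Fin n → F, ‖f a‖ ^ 2 := by
          have hc : (0:ℝ) ≤ (A.card : ℝ) := Nat.cast_nonneg _
          exact mul_le_mul_of_nonneg_left h4 hc
  have hT : ∑ a : Fin n → F, ‖f a‖ ^ 2
      ≤ (Fintype.card F : ℝ) ^ n * ((Fintype.card F : ℝ) - 1) * B.card := by
    simp only [hf, hE]
    exact Tbound ψ hψ B
  -- strict bound on |S|^2
  have hA1 : (1:ℝ) ≤ A.card := by exact_mod_cast Finset.card_pos.mpr hA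
  have hB1 : (1:ℝ) ≤ B.card := by exact_mod_cast Finset.card_pos.mpr hB
  have habs2 : ‖S‖ ^ 2
      < (A.card : ℝ) * B.card * (Fintype.card F : ℝ) ^ (n + 1) := by
    have h5 : (A.card : ℝ) * ((Fintype.card F : ℝ) ^ n * ((Fintype.card F : ℝ) - 1) * B.card)
        < (A.card : ℝ) * B.card * (Fintype.card F : ℝ) ^ (n + 1) := by
      rw [pow_succ]
      have hpos : (0:ℝ) < (A.card : ℝ) * B.card * (Fintype.card F : ℝ) ^ n := by positivity
      nlinarith [hpos]
    calc ‖S‖ ^ 2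
        ≤ (A.card : ℝ) * ∑ a : Fin n → F, ‖f a‖ ^ 2 := hCS
      _ ≤ (A.card : ℝ) * ((Fintype.card F : ℝ) ^ n * ((Fintype.card F : ℝ) - 1) * B.card) := by
          exact mul_le_mul_of_nonneg_left hT (by positivity)
      _ < _ := h5
  -- express LHS via S
  have hLabs : |(N : ℝ) - (Fintype.card F : ℝ)⁻¹ * A.card * B.card|
      = ‖S‖ / (Fintype.card F : ℝ) := by
    have hc : (((N : ℝ) - (Fintype.card F : ℝ)⁻¹ * A.card * B.card : ℝ) : ℂ)
        = S / (Fintype.card F : ℂ) := by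
      rw [hSval]
      push_cast
      field_simp
    calc |(N : ℝ) - (Fintype.card F : ℝ)⁻¹ * A.card * B.card|
        = ‖(((N : ℝ) - (Fintype.card F : ℝ)⁻¹ * A.card * B.card : ℝ) : ℂ)‖ :=
          by rw [Complex.norm_real, Real.norm_eq_abs]
      _ = ‖S / (Fintype.card F : ℂ)‖ := by rw [hc]
      _ = ‖S‖ / (Fintype.card F : ℝ) := by
          rw [norm_div]
          norm_num
  rw [hLabs, div_lt_iff₀ hQpos]
  -- final computation with rpow
  set r : ℝ := (Fintype.card F : ℝ) ^ (((n : ℝ) - 1) / 2) * Real.sqrt (A.card * B.card) with hr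
  have hABpos : (0:ℝ) < (A.card : ℝ) * B.card := by nlinarith
  have hrpos : 0 < r := by
    apply mul_pos
    · exact Real.rpow_pos_of_pos hQpos _
    · exact Real.sqrt_pos.mpr hABpos
  have hsq : (r * (Fintype.card F : ℝ)) ^ 2
      = (A.card : ℝ) * B.card * (Fintype.card F : ℝ) ^ (n + 1) := by
    have h6 : ((Fintype.card F : ℝ) ^ (((n : ℝ) - 1) / 2)) ^ 2
        = (Fintype.card F : ℝ) ^ ((n : ℝ) - 1) := by
      rw [← Real.rpow_natCast ((Fintype.card F : ℝ) ^ (((n : ℝ) - 1) / 2)) 2,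
        ← Real.rpow_mul hQpos.le]
      norm_num
    have h7 : (Fintype.card F : ℝ) ^ ((n : ℝ) - 1) = (Fintype.card F : ℝ) ^ (n - 1 : ℕ) := by
      rw [← Real.rpow_natCast (Fintype.card F : ℝ) (n - 1)]
      congr 1
      have : (1:ℕ) ≤ n := le_trans (by norm_num) hn
      push_cast [this]
      ring
    have h8 : Real.sqrt ((A.card : ℝ) * B.card) ^ 2 = (A.card : ℝ) * B.card :=
      Real.sq_sqrt hABpos.le
    have h9 : (Fintype.card F : ℝ) ^ (n - 1 : ℕ) * (Fintype.card F : ℝ) ^ 2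
        = (Fintype.card F : ℝ) ^ (n + 1) := by
      rw [← pow_add]
      congr 1
      omega
    calc (r * (Fintype.card F : ℝ)) ^ 2
        = ((Fintype.card F : ℝ) ^ (((n : ℝ) - 1) / 2)) ^ 2
            * Real.sqrt ((A.card : ℝ) * B.card) ^ 2 * (Fintype.card F : ℝ) ^ 2 := by
          rw [hr]; ring
      _ = (Fintype.card F : ℝ) ^ (n - 1 : ℕ) * ((A.card : ℝ) * B.card)
            * (Fintype.card F : ℝ) ^ 2 := by rw [h6, h7, h8]
      _ = (A.card : ℝ) * B.card * (Fintype.card F : ℝ) ^ (n + 1) := by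
          rw [mul_comm ((Fintype.card F : ℝ) ^ (n - 1 : ℕ)) _, mul_assoc, h9]
  have hfinal : ‖S‖ ^ 2 < (r * (Fintype.card F : ℝ)) ^ 2 := by
    rw [hsq]; exact habs2
  exact lt_of_pow_lt_pow_left₀ 2 (by positivity) hfinal
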